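/- Let H be a real inner product space and let D, N : H → H be symmetric linear maps (⟪D x, y⟫ = ⟪x, D y⟫ and ⟪N x, y⟫ = ⟪x, N y⟫ for all x, y) that are positive semidefinite (⟪D x, x⟫ ≥ 0 and ⟪N x, x⟫ ≥ 0 for all x). Let δt > 0, M_u, M_v > 0, ε_u, ε_v ∈ ℝ, σ ≥ 0, S_u, S_v ≥ 0, and c ∈ H. Suppose u⁰, u¹, u², v⁰, v¹, v², μ_u, μ_v, w_u, w_v ∈ H and η, W̃⁰, W̃¹, W̃² ∈ ℝ satisfy the stabilized BDF2 scheme: (i) 3u² − 4u¹ + u⁰ = −2δt M_u • D μ_u; (ii) μ_u = ε_u² • D u² + S_u • u² + η • w_u; (iii) 3v² − 4v¹ + v⁰ = −2δt M_v • D μ_v; (iv) μ_v = ε_v² • D v² + S_v • v² + η • w_v + σ • N(v² − c); (v) 3W̃² − 4W̃¹ + W̃⁰ = η (⟪w_u, 3u² − 4u¹ + u⁰⟫ + ⟪w_v, 3v² − 4v¹ + v⁰⟫). For indices (a,b) ∈ {(2,1),(1,0)} define E^{a,b} = (ε_u²/4)(⟪D u^a, u^a⟫ + ⟪D(2u^a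 − u^b), 2u^a − u^b⟫) + (S_u/4)(‖u^a‖² + ‖2u^a − u^b‖²) + (ε_v²/4)(⟪D v^a, v^a⟫ + ⟪D(2v^a − v^b), 2v^a − v^b⟫) + (S_v/4)(‖v^a‖² + ‖2v^a − v^b‖²) + (σ/4)(⟪N(v^a − c), v^a − c⟫ + ⟪N(2v^a − v^b − c), 2v^a − v^b − c⟫) + ½(3W̃^a − W̃^b). Then E^{2,1} − E^{1,0} ≤ −δt (M_u ⟪D μ_u, μ_u⟫ + M_v ⟪D μ_v, μ_v⟫). -/
import Mathlib


open scoped RealInnerProductSpace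

lemma bdf2_key {H : Type*} [NormedAddCommGroup H] [InnerProductSpace ℝ H]
    (B : H →ₗ[ℝ] H) (hB : ∀ x y : H, ⟪B x, y⟫ = ⟪x, B y⟫) (x2 x1 x0 : H) :
    (⟪B x2, x2⟫ + ⟪B ((2:ℝ) • x2 - x1), (2:ℝ) • x2 - x1⟫)
      - (⟪B x1, x1⟫ + ⟪B ((2:ℝ) • x1 - x0), (2:ℝ) • x1 - x0⟫)
    = 2 * ⟪B x2, (3:ℝ) • x2 - (4:ℝ) • x1 + x0⟫
      - ⟪B (x2 - (2:ℝ) • x1 + x0), x2 - (2:ℝ) • x1 + x0⟫ := by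
  have hsym : ∀ x y : H, ⟪B x, y⟫ = ⟪B y, x⟫ :=
    fun x y => (hB x y).trans (real_inner_comm x (B y)).symm
  simp only [map_sub, map_add, map_smul, inner_sub_left, inner_sub_right,
    inner_add_left, inner_add_right, real_inner_smul_left, real_inner_smul_right,
    smul_eq_mul]
  linarith [hsym x2 x1, hsym x2 x0, hsym x1 x0]

lemma bdf2_keyn {H : Type*} [NormedAddCommGroup H] [InnerProductSpace ℝ H]
    (x2 x1 x0 : H) :
    (‖x2‖ ^ 2 + ‖(2:ℝ) • x2 - x1‖ ^ 2) - (‖x1‖ ^ 2 + ‖(2:ℝ) • x1 - x0‖ ^ 2)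
    = 2 * ⟪x2, (3:ℝ) • x2 - (4:ℝ) • x1 + x0⟫ - ‖x2 - (2:ℝ) • x1 + x0‖ ^ 2 := by
  have := bdf2_key (LinearMap.id : H →ₗ[ℝ] H) (fun x y => rfl) x2 x1 x0
  simp only [LinearMap.id_apply] at this
  simp only [← real_inner_self_eq_norm_sq]
  exact this

/-- Unconditional energy stability of the stabilized BDF2 Lagrange-multiplier scheme for the
coupled non-local Cahn–Hilliard (block copolymer) system. -/
theorem coupled_stabilized_bdf2_energy_stability
    {H : Type*} [NormedAddCommGroup H] [InnerProductSpace ℝ H]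
    (D N : H →ₗ[ℝ] H)
    (hD : ∀ x y : H, ⟪D x, y⟫ = ⟪x, D y⟫) (hN : ∀ x y : H, ⟪N x, y⟫ = ⟪x, N y⟫)
    (hDpos : ∀ x : H, 0 ≤ ⟪D x, x⟫) (hNpos : ∀ x : H, 0 ≤ ⟪N x, x⟫)
    (δt Mu Mv εu εv σ Su Sv : ℝ) (hδt : 0 < δt) (hMu : 0 < Mu) (hMv : 0 < Mv)
    (hσ : 0 ≤ σ) (hSu : 0 ≤ Su) (hSv : 0 ≤ Sv)
    (c : H)
    (u0 u1 u2 v0 v1 v2 μu μv wu wv : H) (η W0 W1 W2 : ℝ)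
    (h1 : (3 : ℝ) • u2 - (4 : ℝ) • u1 + u0 = -((2 * δt * Mu) • D μu))
    (h2 : μu = εu ^ 2 • D u2 + Su • u2 + η • wu)
    (h3 : (3 : ℝ) • v2 - (4 : ℝ) • v1 + v0 = -((2 * δt * Mv) • D μv))
    (h4 : μv = εv ^ 2 • D v2 + Sv • v2 + η • wv + σ • N (v2 - c))
    (h5 : 3 * W2 - 4 * W1 + W0
      = η * (⟪wu, (3 : ℝ) • u2 - (4 : ℝ) • u1 + u0⟫
           + ⟪wv, (3 : ℝ) • v2 - (4 : ℝ) • v1 + v0⟫))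
    (E : H → H → H → H → ℝ → ℝ → ℝ)
    (hE : ∀ (ua ub va vb : H) (Wa Wb : ℝ), E ua ub va vb Wa Wb
      = εu ^ 2 / 4 * (⟪D ua, ua⟫ + ⟪D ((2 : ℝ) • ua - ub), (2 : ℝ) • ua - ub⟫)
        + Su / 4 * (‖ua‖ ^ 2 + ‖(2 : ℝ) • ua - ub‖ ^ 2)
        + εv ^ 2 / 4 * (⟪D va, va⟫ + ⟪D ((2 : ℝ) • va - vb), (2 : ℝ) • va - vb⟫)
        + Sv / 4 * (‖va‖ ^ 2 + ‖(2 : ℝ) • va - vb‖ ^ 2)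
        + σ / 4 * (⟪N (va - c), va - c⟫
                 + ⟪N ((2 : ℝ) • va - vb - c), (2 : ℝ) • va - vb - c⟫)
        + (1 / 2 : ℝ) * (3 * Wa - Wb)) :
    E u2 u1 v2 v1 W2 W1 - E u1 u0 v1 v0 W1 W0
      ≤ -(δt * (Mu * ⟪D μu, μu⟫ + Mv * ⟪D μv, μv⟫)) := by
  -- abbreviations for the BDF2 residuals
  set ru : H := (3 : ℝ) • u2 - (4 : ℝ) • u1 + u0 with hru
  set rv : H := (3 : ℝ) • v2 - (4 : ℝ) • v1 + v0 with hrv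
  -- key telescoping identities
  have ku := bdf2_key D hD u2 u1 u0
  have kv := bdf2_key D hD v2 v1 v0
  have kun := bdf2_keyn u2 u1 u0
  have kvn := bdf2_keyn v2 v1 v0
  have kN0 := bdf2_key N hN (v2 - c) (v1 - c) (v0 - c)
  have e1 : (3 : ℝ) • (v2 - c) - (4 : ℝ) • (v1 - c) + (v0 - c) = rv := by
    rw [hrv]; module
  have e2 : (2 : ℝ) • (v2 - c) - (v1 - c) = (2 : ℝ) • v2 - v1 - c := by module
  have e3 : (2 : ℝ) • (v1 - c) - (v0 - c) = (2 : ℝ) • v1 - v0 - c := by module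
  have e4 : (v2 - c) - (2 : ℝ) • (v1 - c) + (v0 - c) = v2 - (2 : ℝ) • v1 + v0 := by
    module
  rw [e1, e2, e3, e4] at kN0
  rw [← hru] at ku kun
  rw [← hrv] at kv kvn
  -- scalar consequences of the scheme
  have s1 : ⟪μu, ru⟫ = -(2 * δt * Mu) * ⟪D μu, μu⟫ := by
    rw [h1, inner_neg_right, real_inner_smul_right, real_inner_comm]
    ring
  have s3 : ⟪μv, rv⟫ = -(2 * δt * Mv) * ⟪D μv, μv⟫ := by
    rw [h3, inner_neg_right, real_inner_smul_right, real_inner_comm]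
    ring
  have s2 : ⟪μu, ru⟫
      = εu ^ 2 * ⟪D u2, ru⟫ + Su * ⟪u2, ru⟫ + η * ⟪wu, ru⟫ := by
    rw [h2]
    simp only [inner_add_left, real_inner_smul_left]
  have s4 : ⟪μv, rv⟫
      = εv ^ 2 * ⟪D v2, rv⟫ + Sv * ⟪v2, rv⟫ + η * ⟪wv, rv⟫
        + σ * ⟪N (v2 - c), rv⟫ := by
    rw [h4]
    simp only [inner_add_left, real_inner_smul_left]
  -- exact energy identity
  have main : E u2 u1 v2 v1 W2 W1 - E u1 u0 v1 v0 W1 W0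
      = -(δt * (Mu * ⟪D μu, μu⟫ + Mv * ⟪D μv, μv⟫))
        - εu ^ 2 / 4 * ⟪D (u2 - (2 : ℝ) • u1 + u0), u2 - (2 : ℝ) • u1 + u0⟫
        - Su / 4 * ‖u2 - (2 : ℝ) • u1 + u0‖ ^ 2
        - εv ^ 2 / 4 * ⟪D (v2 - (2 : ℝ) • v1 + v0), v2 - (2 : ℝ) • v1 + v0⟫
        - Sv / 4 * ‖v2 - (2 : ℝ) • v1 + v0‖ ^ 2
        - σ / 4 * ⟪N (v2 - (2 : ℝ) • v1 + v0), v2 - (2 : ℝ) • v1 + v0⟫ := by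
    rw [hE, hE]
    linear_combination (εu ^ 2 / 4) * ku + (Su / 4) * kun + (εv ^ 2 / 4) * kv
      + (Sv / 4) * kvn + (σ / 4) * kN0 + (1 / 2 : ℝ) * h5
      - (1 / 2 : ℝ) * s2 - (1 / 2 : ℝ) * s4 + (1 / 2 : ℝ) * s1 + (1 / 2 : ℝ) * s3
  rw [main]
  have p1 : 0 ≤ εu ^ 2 / 4 * ⟪D (u2 - (2 : ℝ) • u1 + u0), u2 - (2 : ℝ) • u1 + u0⟫ :=
    mul_nonneg (by positivity) (hDpos _)
  have p2 : 0 ≤ Su / 4 * ‖u2 - (2 : ℝ) • u1 + u0‖ ^ 2 :=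
    mul_nonneg (by linarith) (by positivity)
  have p3 : 0 ≤ εv ^ 2 / 4 * ⟪D (v2 - (2 : ℝ) • v1 + v0), v2 - (2 : ℝ) • v1 + v0⟫ :=
    mul_nonneg (by positivity) (hDpos _)
  have p4 : 0 ≤ Sv / 4 * ‖v2 - (2 : ℝ) • v1 + v0‖ ^ 2 :=
    mul_nonneg (by linarith) (by positivity)
  have p5 : 0 ≤ σ / 4 * ⟪N (v2 - (2 : ℝ) • v1 + v0), v2 - (2 : ℝ) • v1 + v0⟫ :=
    mul_nonneg (by linarith) (hNpos _)
  linarith
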